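/- Let H be a real inner product space and L : H →L[ℝ] H a skew-adjoint continuous linear operator, i.e., ⟪L x, y⟫ = −⟪x, L y⟫ for all x, y ∈ H. Let t_s > 0, let f, g : ℝ → H be continuous with f t = 0 and g t = 0 whenever |t| ≥ t_s, and let ψ_f, ψ_g : ℝ → H satisfy HasDerivAt ψ_f (f t − L (ψ_f t)) t and HasDerivAt ψ_g (g t − L (ψ_g t)) t for all t ∈ ℝ, together with the causality conditions ψ_f t = 0 and ψ_g t = 0 for all t ≤ −t_s. Then for every τ ≥ t_s and every σ ≥ 0, ⟪ψ_f τ, ψ_g (τ + σ)⟫ = ∫_{−t_s}^{t_s} ⟪f t, ψ_g (t + σ)⟫ dt + ∫_{−t_s}^{t_s} ⟪ψ_f (t − σ), g t⟫ dt. In particular, the left-hand side is independent of τ ≥ t_s and is determined by the forcing terms paired with the wave fields (the measured data). -/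

import Mathlib

open scoped RealInnerProductSpace

/-- With `L` skew-adjoint, `f, g` continuous forcings supported in
`[-t_s, t_s]`, and causal solutions `ψ_f, ψ_g` of the forced evolution equations, for
every `τ ≥ t_s` and `σ ≥ 0`,
`⟪ψ_f τ, ψ_g (τ + σ)⟫ = ∫_{−t_s}^{t_s} ⟪f t, ψ_g (t + σ)⟫ dt
  + ∫_{−t_s}^{t_s} ⟪ψ_f (t − σ), g t⟫ dt`. -/
theorem inner_waves_data_driven
    {H : Type*} [NormedAddCommGroup H] [InnerProductSpace ℝ H]
    (L : H →L[ℝ] H) (hL : ∀ x y : H, ⟪L x, y⟫ = -⟪x, L y⟫)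
    (t_s : ℝ) (hts : 0 < t_s)
    (f g : ℝ → H) (hfc : Continuous f) (hgc : Continuous g)
    (hfsupp : ∀ t : ℝ, t_s ≤ |t| → f t = 0)
    (hgsupp : ∀ t : ℝ, t_s ≤ |t| → g t = 0)
    (ψf ψg : ℝ → H)
    (hf : ∀ t : ℝ, HasDerivAt ψf (f t - L (ψf t)) t)
    (hg : ∀ t : ℝ, HasDerivAt ψg (g t - L (ψg t)) t)
    (hfcausal : ∀ t : ℝ, t ≤ -t_s → ψf t = 0)
    (hgcausal : ∀ t : ℝ, t ≤ -t_s → ψg t = 0) :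
    ∀ τ : ℝ, t_s ≤ τ → ∀ σ : ℝ, 0 ≤ σ →
      ⟪ψf τ, ψg (τ + σ)⟫ =
        (∫ t in (-t_s)..t_s, ⟪f t, ψg (t + σ)⟫) +
        (∫ t in (-t_s)..t_s, ⟪ψf (t - σ), g t⟫) := by
  intro τ hτ σ hσ
  have hψfc : Continuous ψf := continuous_iff_continuousAt.mpr fun t => (hf t).continuousAt
  have hψgc : Continuous ψg := continuous_iff_continuousAt.mpr fun t => (hg t).continuousAt
  -- derivative of F t = ⟪ψf t, ψg (t + σ)⟫
  have hderiv : ∀ t : ℝ, HasDerivAt (fun t => ⟪ψf t, ψg (t + σ)⟫)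
      (⟪f t, ψg (t + σ)⟫ + ⟪ψf t, g (t + σ)⟫) t := by
    intro t
    have h1 : HasDerivAt (fun t => ψg (t + σ)) (g (t + σ) - L (ψg (t + σ))) t := by
      simpa [Function.comp_def] using (hg (t + σ)).scomp t ((hasDerivAt_id t).add_const σ)
    have := (hf t).inner ℝ h1
    refine this.congr_deriv ?_
    rw [inner_sub_right, inner_sub_left, hL (ψf t) (ψg (t + σ))]
    ring
  -- continuity of the derivative
  have hcont : Continuous fun t => ⟪f t, ψg (t + σ)⟫ + ⟪ψf t, g (t + σ)⟫ := by
    apply Continuous.add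
    · exact continuous_inner.comp (hfc.prodMk (hψgc.comp (continuous_id.add continuous_const)))
    · exact continuous_inner.comp (hψfc.prodMk (hgc.comp (continuous_id.add continuous_const)))
  have hint : ∀ a b : ℝ, ⟪ψf b, ψg (b + σ)⟫ - ⟪ψf a, ψg (a + σ)⟫ =
      ∫ t in a..b, (⟪f t, ψg (t + σ)⟫ + ⟪ψf t, g (t + σ)⟫) := by
    intro a b
    rw [intervalIntegral.integral_eq_sub_of_hasDerivAt (fun t _ => hderiv t)
      (hcont.intervalIntegrable a b)]
  have hFa : ⟪ψf (-t_s), ψg (-t_s + σ)⟫ = 0 := by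
    rw [hfcausal (-t_s) le_rfl, inner_zero_left]
  have key := hint (-t_s) τ
  rw [hFa, sub_zero] at key
  rw [key]
  have hic1 : Continuous fun t : ℝ => ⟪f t, ψg (t + σ)⟫ :=
    continuous_inner.comp (hfc.prodMk (hψgc.comp (continuous_id.add continuous_const)))
  have hic2 : Continuous fun t : ℝ => ⟪ψf t, g (t + σ)⟫ :=
    continuous_inner.comp (hψfc.prodMk (hgc.comp (continuous_id.add continuous_const)))
  have hic3 : Continuous fun t : ℝ => ⟪ψf (t - σ), g t⟫ :=
    continuous_inner.comp ((hψfc.comp (continuous_id.sub continuous_const)).prodMk hgc)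
  rw [intervalIntegral.integral_add (hic1.intervalIntegrable _ _) (hic2.intervalIntegrable _ _)]
  congr 1
  · -- first integral: truncate [t_s, τ] where f = 0
    have hz : (∫ t in t_s..τ, ⟪f t, ψg (t + σ)⟫) = 0 := by
      rw [intervalIntegral.integral_congr (g := fun _ => (0 : ℝ)), intervalIntegral.integral_zero]
      intro t ht
      rw [Set.uIcc_of_le hτ] at ht
      simp only [hfsupp t (le_trans ht.1 (le_abs_self t)), inner_zero_left]
    rw [← intervalIntegral.integral_add_adjacent_intervals (a := -t_s) (b := t_s) (c := τ)
      (hic1.intervalIntegrable _ _) (hic1.intervalIntegrable _ _), hz, add_zero]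
  · -- second integral: change of variable t ↦ t + σ, then truncate
    have hcomp : (∫ t in (-t_s)..τ, ⟪ψf t, g (t + σ)⟫) =
        ∫ t in (-t_s + σ)..(τ + σ), ⟪ψf (t - σ), g t⟫ := by
      rw [← intervalIntegral.integral_comp_add_right (fun t => ⟪ψf (t - σ), g t⟫) σ]
      simp
    rw [hcomp]
    have hz1 : (∫ t in (-t_s + σ)..(-t_s), ⟪ψf (t - σ), g t⟫) = 0 := by
      rw [intervalIntegral.integral_congr (g := fun _ => (0 : ℝ)), intervalIntegral.integral_zero]
      intro t ht
      rw [Set.uIcc_comm, Set.uIcc_of_le (by linarith)] at ht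
      simp only [hfcausal (t - σ) (by linarith [ht.2]), inner_zero_left]
    have hz2 : (∫ t in t_s..(τ + σ), ⟪ψf (t - σ), g t⟫) = 0 := by
      rw [intervalIntegral.integral_congr (g := fun _ => (0 : ℝ)), intervalIntegral.integral_zero]
      intro t ht
      rw [Set.uIcc_of_le (by linarith)] at ht
      show ⟪ψf (t - σ), g t⟫ = 0
      rw [hgsupp t (le_trans ht.1 (le_abs_self t)), inner_zero_right]
    have h1 := intervalIntegral.integral_add_adjacent_intervals (a := -t_s + σ) (b := -t_s)
      (c := t_s) (μ := MeasureTheory.volume) (hic3.intervalIntegrable _ _) (hic3.intervalIntegrable _ _)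
    have h2 := intervalIntegral.integral_add_adjacent_intervals (a := -t_s + σ) (b := t_s)
      (c := τ + σ) (μ := MeasureTheory.volume) (hic3.intervalIntegrable _ _) (hic3.intervalIntegrable _ _)
    rw [← h2, ← h1, hz1, hz2, zero_add, add_zero]
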